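/- Let G be a finite simple bipartite graph with bipartition {V₁, V₂} in which every vertex has degree at least 1, and let τ : V(G) → ℕ be given by τ(v) = 1 for v ∈ V₁ and τ(v) = deg(v) for v ∈ V₂. If S is a target set of G, then every vertex u ∈ V₁ \ S has at least one neighbor in V₂ ∩ S, i.e., N(u) ∩ (V₂ ∩ S) ≠ ∅. -/
import Mathlib

open scoped Classical

/-- The neighborhood of `u` in `G`, as a finset. -/
noncomputable def nbrs {V : Type*} [Fintype V] (G : SimpleGraph V) (u : V) : Finset V :=
  Finset.univ.filter (fun w => G.Adj u w)

/-- The diffusion process: `diffusion G τ S i` is the set `A[S,i]` of vertices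
active after `i` rounds starting from seed set `S`. -/
noncomputable def diffusion {V : Type*} [Fintype V] (G : SimpleGraph V) (τ : V → ℕ)
    (S : Finset V) : ℕ → Finset V
  | 0 => S
  | (i + 1) => diffusion G τ S i ∪
      Finset.univ.filter (fun u => τ u ≤ (nbrs G u ∩ diffusion G τ S i).card)

/-- The influence of a seed set `S`: all vertices eventually activated. -/
def influence {V : Type*} [Fintype V] (G : SimpleGraph V) (τ : V → ℕ) (S : Finset V) : Set V :=
  {v | ∃ i, v ∈ diffusion G τ S i}

/-- `S` is a target set if its influence is the whole vertex set. -/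
def isTargetSet {V : Type*} [Fintype V] (G : SimpleGraph V) (τ : V → ℕ) (S : Finset V) : Prop :=
  influence G τ S = Set.univ

/-- `C` is a vertex cover of `G`. -/
def isVertexCover {V : Type*} [Fintype V] (G : SimpleGraph V) (C : Finset V) : Prop :=
  ∀ u v, G.Adj u v → u ∈ C ∨ v ∈ C

/-- In the bipartite setting, every vertex of `V₁` outside a target set `S`
has a neighbor in `V₂ ∩ S`. -/
theorem targetSet_neighbor_in_V2 {V : Type*} [Fintype V] (G : SimpleGraph V) (τ : V → ℕ)
    (V1 V2 : Finset V) (hdisj : Disjoint V1 V2) (hunion : V1 ∪ V2 = Finset.univ)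
    (hbip : ∀ u v : V, G.Adj u v → (u ∈ V1 ∧ v ∈ V2) ∨ (u ∈ V2 ∧ v ∈ V1))
    (hdeg : ∀ v : V, 1 ≤ (nbrs G v).card)
    (hτ1 : ∀ v ∈ V1, τ v = 1) (hτ2 : ∀ v ∈ V2, τ v = (nbrs G v).card)
    (S : Finset V) (hS : isTargetSet G τ S) :
    ∀ u ∈ V1, u ∉ S → ∃ w ∈ V2 ∩ S, G.Adj u w := by
  have L : ∀ j, ∀ w, w ∈ V2 → w ∉ S → w ∈ diffusion G τ S j →
      ∃ k, k < j ∧ nbrs G w ⊆ diffusion G τ S k := by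
    intro j
    induction j with
    | zero => intro w _ hwS hw; exact absurd hw hwS
    | succ j ih =>
      intro w hw2 hwS hw
      simp only [diffusion, Finset.mem_union, Finset.mem_filter] at hw
      rcases hw with hw | ⟨_, hw⟩
      · obtain ⟨k, hk, hsub⟩ := ih w hw2 hwS hw
        exact ⟨k, Nat.lt_succ_of_lt hk, hsub⟩
      · refine ⟨j, Nat.lt_succ_self j, ?_⟩
        rw [hτ2 w hw2] at hw
        have heq : nbrs G w ∩ diffusion G τ S j = nbrs G w :=
          Finset.eq_of_subset_of_card_le Finset.inter_subset_left hw
        exact Finset.inter_eq_left.mp heq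
  intro u hu1 huS
  have hu : u ∈ influence G τ S := by rw [hS]; trivial
  obtain ⟨i, hi⟩ := hu
  revert hi
  induction i using Nat.strong_induction_on with
  | _ i ih =>
    intro hi
    cases i with
    | zero => exact absurd hi huS
    | succ n =>
      simp only [diffusion, Finset.mem_union, Finset.mem_filter] at hi
      rcases hi with hi | ⟨_, hi⟩
      · exact ih n (Nat.lt_succ_self n) hi
      · rw [hτ1 u hu1] at hi
        obtain ⟨w, hw⟩ := Finset.card_pos.mp hi
        rw [Finset.mem_inter] at hw
        have hadj : G.Adj u w := by
          have := hw.1; simp only [nbrs, Finset.mem_filter] at this; exact this.2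
        have hw2 : w ∈ V2 := by
          rcases hbip u w hadj with ⟨_, h⟩ | ⟨h, _⟩
          · exact h
          · exact absurd h (Finset.disjoint_left.mp hdisj hu1)
        by_cases hwS : w ∈ S
        · exact ⟨w, Finset.mem_inter.mpr ⟨hw2, hwS⟩, hadj⟩
        · obtain ⟨k, hk, hsub⟩ := L n w hw2 hwS hw.2
          have hu' : u ∈ diffusion G τ S k := by
            apply hsub
            simp only [nbrs, Finset.mem_filter]
            exact ⟨Finset.mem_univ u, hadj.symm⟩
          exact ih k (hk.trans (Nat.lt_succ_self n)) hu'
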